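/- Let G be a group with identity e and suppose there exist elements g₁, g₂, g₃ ∈ G and a subset D ⊆ G∖{e} such that D ∪ g₁Dg₁⁻¹ = G∖{e} and the three sets D, g₂Dg₂⁻¹, g₃Dg₃⁻¹ are pairwise disjoint. For g ∈ G let U_g denote the unitary operator on ℓ²(G∖{e}) induced by the bijection w ↦ g⁻¹wg of G∖{e}. Then the operator (1/4)(I + U_{g₁} + U_{g₂} + U_{g₃}) on ℓ²(G∖{e}) has operator norm strictly smaller than one. -/

import Mathlib

noncomputable section

/-- The Hilbert space `ℓ²(X)`. -/
abbrev Hecke.l2 (X : Type*) : Type _ := lp (fun _ : X => ℂ) 2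

/-- The canonical orthonormal basis vector `δ_x` of `ℓ²(X)`. -/
noncomputable def Hecke.dirac {X : Type*} (x : X) : Hecke.l2 X :=
  letI := Classical.decEq X
  lp.single 2 x 1

namespace PowersAux

open Hecke
open scoped ComplexConjugate

variable {X : Type*}

local notation "⟪" x ", " y "⟫" => @inner ℂ _ _ x y

lemma dirac_apply_self (x : X) : (dirac x : l2 X) x = 1 := by
  classical
  simp [Hecke.dirac, lp.single_apply_self]

lemma dirac_apply_ne {x y : X} (h : y ≠ x) : (dirac x : l2 X) y = 0 := by
  classical
  simp [Hecke.dirac, lp.single_apply_ne _ _ _ h, Pi.single_apply, h]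

/-- Evaluation at a point as a continuous linear map. -/
def evalCLM (y : X) : l2 X →L[ℂ] ℂ :=
  LinearMap.mkContinuous
    { toFun := fun f => f y
      map_add' := fun f g => by simp [lp.coeFn_add]
      map_smul' := fun c f => by simp [lp.coeFn_smul] }
    1 (fun f => by
      rw [one_mul]; exact lp.norm_apply_le_norm two_ne_zero f y)

@[simp] lemma evalCLM_apply (y : X) (f : l2 X) : evalCLM y f = f y := rfl

/-- Pointwise formula for a continuous linear map permuting the canonical basis. -/
lemma apply_eq (T : l2 X →L[ℂ] l2 X) (σ : X ≃ X)
    (hT : ∀ w, T (dirac w) = dirac (σ w)) (f : l2 X) (y : X) :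
    T f y = f (σ.symm y) := by
  classical
  have h1 : HasSum (fun w : X => lp.single 2 w (f w)) f :=
    lp.hasSum_single (by norm_num) f
  have h2 : HasSum (fun w : X => (evalCLM y) (T (lp.single 2 w (f w))))
      (evalCLM y (T f)) := (h1.mapL T).mapL (evalCLM y)
  have h3 : (fun w : X => (evalCLM y) (T (lp.single 2 w (f w))))
      = fun w : X => if w = σ.symm y then f (σ.symm y) else 0 := by
    funext w
    have hs : lp.single (E := fun _ : X => ℂ) 2 w (f w) = (f w) • dirac w := by
      simp [Hecke.dirac, ← lp.single_smul]
    rw [hs, map_smul, hT, map_smul]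
    by_cases hw : w = σ.symm y
    · subst hw
      simp only [evalCLM_apply, smul_eq_mul, if_pos rfl]
      rw [Equiv.apply_symm_apply, dirac_apply_self, mul_one]
      simp
    · have hy : y ≠ σ w := fun hy => hw (by rw [hy, Equiv.symm_apply_apply])
      simp only [evalCLM_apply, smul_eq_mul, if_neg hw]
      rw [dirac_apply_ne hy, mul_zero]
  rw [h3] at h2
  exact h2.unique (hasSum_ite_eq _ _)

lemma memℓp_of_le {f : l2 X} {h : X → ℂ} (hle : ∀ x, ‖h x‖ ≤ ‖f x‖) :
    Memℓp h 2 := by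
  apply memℓp_gen
  refine Summable.of_nonneg_of_le (fun x => by positivity)
    (fun x => ?_) ((lp.memℓp f).summable (by norm_num))
  exact Real.rpow_le_rpow (norm_nonneg _) (hle x) (by norm_num)

lemma memℓp_comp (σ : X ≃ X) (f : l2 X) : Memℓp (fun x => f (σ x)) 2 := by
  apply memℓp_gen
  have h := (lp.memℓp f).summable (p := 2) (by norm_num)
  exact (Equiv.summable_iff σ).mpr h

/-- Composition of an `ℓ²` function with a bijection of the index set. -/
def compVec (σ : X ≃ X) (f : l2 X) : l2 X := ⟨fun x => f (σ x), memℓp_comp σ f⟩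

@[simp] lemma compVec_apply (σ : X ≃ X) (f : l2 X) (x : X) :
    compVec σ f x = f (σ x) := rfl

lemma inner_l2 (f g : l2 X) : ⟪f, g⟫ = ∑' x, conj (f x) * g x := by
  rw [lp.inner_eq_tsum]
  exact tsum_congr fun x => RCLike.inner_apply' _ _

lemma norm_sq_l2 (f : l2 X) : ‖f‖ ^ 2 = RCLike.re ⟪f, f⟫ :=
  (inner_self_eq_norm_sq (𝕜 := ℂ) f).symm

lemma inner_compVec (σ : X ≃ X) (f g : l2 X) :
    ⟪compVec σ f, compVec σ g⟫ = ⟪f, g⟫ := by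
  rw [inner_l2, inner_l2]
  exact Equiv.tsum_eq σ (fun x => conj (f x) * g x)

lemma norm_compVec (σ : X ≃ X) (f : l2 X) : ‖compVec σ f‖ = ‖f‖ := by
  have h : ‖compVec σ f‖ ^ 2 = ‖f‖ ^ 2 := by
    rw [norm_sq_l2, norm_sq_l2, inner_compVec]
  have h1 := norm_nonneg (compVec σ f)
  have h2 := norm_nonneg f
  nlinarith

/-- adjoint-type identity -/
lemma inner_U_left (T : l2 X →L[ℂ] l2 X) (σ : X ≃ X)
    (hT : ∀ w, T (dirac w) = dirac (σ w)) (f g : l2 X) :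
    ⟪T f, g⟫ = ⟪f, compVec σ g⟫ := by
  rw [inner_l2, inner_l2]
  rw [← Equiv.tsum_eq σ (fun y => conj (T f y) * g y)]
  refine tsum_congr (fun w => ?_)
  rw [apply_eq T σ hT]
  simp

lemma norm_U (T : l2 X →L[ℂ] l2 X) (σ : X ≃ X)
    (hT : ∀ w, T (dirac w) = dirac (σ w)) (f : l2 X) : ‖T f‖ = ‖f‖ := by
  have h : ‖T f‖ ^ 2 = ‖f‖ ^ 2 := by
    rw [norm_sq_l2, norm_sq_l2]
    rw [inner_l2, inner_l2]
    rw [← Equiv.tsum_eq σ.symm (fun y => conj (f y) * f y)]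
    congr 1
    refine tsum_congr (fun y => ?_)
    rw [apply_eq T σ hT]
  have h1 := norm_nonneg (T f)
  have h2 := norm_nonneg f
  nlinarith


lemma bessel_div {s w c d : ℝ} (hs0 : 0 ≤ s) (hc : 0 ≤ c) (hd : 0 ≤ d)
    (h1 : s ≤ w * d) (h2 : w ^ 2 = s * c ^ 2) : s ≤ c ^ 2 * d ^ 2 := by
  rcases eq_or_lt_of_le hs0 with h | h
  · rw [← h]; positivity
  · have h3 : s ^ 2 ≤ (w * d) ^ 2 := by
      have hwd : 0 ≤ w * d := le_trans (le_of_lt h) h1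
      nlinarith
    rw [mul_pow, h2] at h3
    have h4 : s * s ≤ s * (c ^ 2 * d ^ 2) := by nlinarith
    exact le_of_mul_le_mul_left h4 h

lemma powers_arith {c d na nb : ℝ}
    (hc0 : 0 ≤ c) (hd0 : 0 ≤ d) (hpyth : c ^ 2 + d ^ 2 = 1)
    (key0 : d ^ 2 - (1/10) * d ≤ c * d)
    (hna : c ^ 2 - (1/10) * c ≤ na) (hnb : c ^ 2 - (1/10) * c ≤ nb)
    (hbessel : na ^ 2 + nb ^ 2 ≤ c ^ 2 * d ^ 2) : False := by
  by_cases hcase : c ≤ 1/10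
  · have hcd : c * d ≤ (1/10) * d := mul_le_mul_of_nonneg_right hcase hd0
    have hd5 : d ≤ 1/5 := by nlinarith
    nlinarith
  · push_neg at hcase
    have hposc : (0:ℝ) < c := lt_trans (by norm_num) hcase
    have hq : (0:ℝ) ≤ c ^ 2 - (1/10) * c := by nlinarith
    have ha2 : (c ^ 2 - (1/10) * c) ^ 2 ≤ na ^ 2 := by nlinarith
    have hb2 : (c ^ 2 - (1/10) * c) ^ 2 ≤ nb ^ 2 := by nlinarith
    have hfin : 2 * (c ^ 2 - (1/10) * c) ^ 2 ≤ c ^ 2 * d ^ 2 := by linarith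
    clear ha2 hb2 hna hnb hbessel hq
    have hdle : d ≤ c + 1/10 := by
      rcases eq_or_lt_of_le hd0 with h | h
      · rw [← h]; linarith
      · nlinarith
    have hdsq : d ^ 2 ≤ c ^ 2 + (1/5) * c + 1/100 := by nlinarith
    clear hdle key0
    have h5 : c ^ 2 * (c ^ 2 - (6/10) * c + 1/100) ≤ 0 := by nlinarith
    clear hfin
    have hkey : c ^ 2 - (6/10) * c + 1/100 ≤ 0 := by
      by_contra hK
      push_neg at hK
      have hc2 : (0:ℝ) < c ^ 2 := by positivity
      exact absurd h5 (not_le.mpr (mul_pos hc2 hK))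
    have hlin : (101:ℝ)/140 ≤ c := by linarith
    have hcc : (101/140) * c ≤ c ^ 2 := by
      nlinarith [mul_nonneg hc0 (sub_nonneg.mpr hlin)]
    linarith

end PowersAux

open Hecke PowersAux ComplexConjugate in
set_option maxHeartbeats 2000000 in
/-- Powers-type averaging estimate: if `D ⊆ G∖{e}` satisfies
`D ∪ g₁Dg₁⁻¹ = G∖{e}` and `D, g₂Dg₂⁻¹, g₃Dg₃⁻¹` are pairwise disjoint, then the average
`(1/4)(I + U_{g₁} + U_{g₂} + U_{g₃})` of the conjugation unitaries on `ℓ²(G∖{e})` has norm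
strictly smaller than one. -/
theorem powers_averaging_norm_lt_one {G : Type*} [Group G]
    (g : Fin 3 → G) (D : Set G)
    (hD : D ⊆ {w : G | w ≠ 1})
    (hcover : D ∪ (fun d => g 0 * d * (g 0)⁻¹) '' D = {w : G | w ≠ 1})
    (hdisj₁ : Disjoint D ((fun d => g 1 * d * (g 1)⁻¹) '' D))
    (hdisj₂ : Disjoint D ((fun d => g 2 * d * (g 2)⁻¹) '' D))
    (hdisj₃ : Disjoint ((fun d => g 1 * d * (g 1)⁻¹) '' D) ((fun d => g 2 * d * (g 2)⁻¹) '' D))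
    (U : Fin 3 → (l2 {w : G // w ≠ 1} →L[ℂ] l2 {w : G // w ≠ 1}))
    (hU : ∀ (i : Fin 3) (w : {w : G // w ≠ 1}),
      U i (dirac w) = dirac (⟨(g i)⁻¹ * w.1 * g i,
        fun h => w.2 (by simpa [mul_assoc] using congrArg (fun x => g i * x * (g i)⁻¹) h)⟩ :
          {w : G // w ≠ 1})) :
    ‖(1/4 : ℂ) • ((1 : l2 {w : G // w ≠ 1} →L[ℂ] l2 {w : G // w ≠ 1}) + U 0 + U 1 + U 2)‖
      < 1 := by
  classical
  set A : l2 {w : G // w ≠ 1} →L[ℂ] l2 {w : G // w ≠ 1} :=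
    (1 : l2 {w : G // w ≠ 1} →L[ℂ] l2 {w : G // w ≠ 1}) + U 0 + U 1 + U 2 with hA
  -- the conjugation bijections
  have mkne : ∀ (h : G) (w : {w : G // w ≠ 1}), h⁻¹ * w.1 * h ≠ 1 := by
    intro h w hw
    apply w.2
    have := congrArg (fun x => h * x * h⁻¹) hw
    simpa [mul_assoc] using this
  let σ : Fin 3 → ({w : G // w ≠ 1} ≃ {w : G // w ≠ 1}) := fun i =>
    { toFun := fun w => ⟨(g i)⁻¹ * w.1 * g i, mkne (g i) w⟩
      invFun := fun w => ⟨g i * w.1 * (g i)⁻¹, by simpa using mkne (g i)⁻¹ w⟩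
      left_inv := fun w => by
        ext
        simp [mul_assoc]
      right_inv := fun w => by
        ext
        simp [mul_assoc] }
  have hσ : ∀ (i : Fin 3) (w : {w : G // w ≠ 1}), U i (dirac w) = dirac (σ i w) := fun i w => hU i w
  have hptw : ∀ (i : Fin 3) (f : l2 {w : G // w ≠ 1}) (y : {w : G // w ≠ 1}), U i f y = f ((σ i).symm y) :=
    fun i => apply_eq (U i) (σ i) (hσ i)
  have hUnorm : ∀ (i : Fin 3) (f : l2 {w : G // w ≠ 1}), ‖U i f‖ = ‖f‖ :=
    fun i => norm_U (U i) (σ i) (hσ i)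
  have hUadj : ∀ (i : Fin 3) (f h : l2 {w : G // w ≠ 1}),
      (inner ℂ (U i f) h : ℂ) = inner ℂ f (compVec (σ i) h) :=
    fun i => inner_U_left (U i) (σ i) (hσ i)
  -- Dichotomy: some unitary moves η by at least 1/10
  have dich : ∀ η : l2 {w : G // w ≠ 1}, ‖η‖ = 1 →
      ((1/10 : ℝ) ≤ ‖U 0 η - η‖ ∨ (1/10 : ℝ) ≤ ‖U 1 η - η‖ ∨ (1/10 : ℝ) ≤ ‖U 2 η - η‖) := by
    intro η hη
    by_contra hcon
    push_neg at hcon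
    obtain ⟨hs0, hs1, hs2⟩ := hcon
    -- split η into the part supported on D and the rest
    have hmemζ : Memℓp (fun x : {w : G // w ≠ 1} => if x.1 ∈ D then η x else 0) 2 :=
      memℓp_of_le (f := η) (fun x => by split <;> simp)
    have hmemθ : Memℓp (fun x : {w : G // w ≠ 1} => if x.1 ∈ D then 0 else η x) 2 :=
      memℓp_of_le (f := η) (fun x => by split <;> simp)
    set ζ : l2 {w : G // w ≠ 1} := ⟨fun x : {w : G // w ≠ 1} => if x.1 ∈ D then η x else 0, hmemζ⟩ with hζ
    set θ : l2 {w : G // w ≠ 1} := ⟨fun x : {w : G // w ≠ 1} => if x.1 ∈ D then 0 else η x, hmemθ⟩ with hθ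
    have hζx : ∀ x : {w : G // w ≠ 1}, ζ x = if x.1 ∈ D then η x else 0 := fun x => rfl
    have hθx : ∀ x : {w : G // w ≠ 1}, θ x = if x.1 ∈ D then 0 else η x := fun x => rfl
    have hζD : ∀ x : {w : G // w ≠ 1}, ζ x ≠ 0 → x.1 ∈ D := by
      intro x hx
      by_contra hxD
      exact hx ((hζx x).trans (if_neg hxD))
    have hθD : ∀ x : {w : G // w ≠ 1}, θ x ≠ 0 → x.1 ∉ D := by
      intro x hx hxD
      exact hx ((hθx x).trans (if_pos hxD))
    have hadd : ζ + θ = η := by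
      apply lp.ext
      funext x
      simp only [lp.coeFn_add, Pi.add_apply]
      by_cases hx : x.1 ∈ D <;> simp [hx, hζx, hθx]
    have hζθ : (inner ℂ ζ θ : ℂ) = 0 := by
      rw [inner_l2]
      have hz : ∀ x : {w : G // w ≠ 1}, conj (ζ x) * θ x = 0 := by
        intro x
        by_cases hx : x.1 ∈ D
        · rw [hθx x, if_pos hx, mul_zero]
        · rw [hζx x, if_neg hx, map_zero, zero_mul]
      rw [tsum_congr hz, tsum_zero]
    have hθζ : (inner ℂ θ ζ : ℂ) = 0 := by
      rw [← inner_conj_symm, hζθ, map_zero]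
    set c : ℝ := ‖ζ‖ with hc
    set d : ℝ := ‖θ‖ with hd
    have hc0 : 0 ≤ c := norm_nonneg _
    have hd0 : 0 ≤ d := norm_nonneg _
    have hpyth : c ^ 2 + d ^ 2 = 1 := by
      have hnq := norm_add_sq (𝕜 := ℂ) ζ θ
      rw [hadd, hη, hζθ] at hnq
      simp at hnq
      linarith
    -- the two orthogonal images of ζ
    set v₁ : l2 {w : G // w ≠ 1} := compVec (σ 1) ζ with hv₁
    set v₂ : l2 {w : G // w ≠ 1} := compVec (σ 2) ζ with hv₂
    have hv₁x : ∀ x : {w : G // w ≠ 1}, v₁ x = ζ ((σ 1) x) := fun x => rfl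
    have hv₂x : ∀ x : {w : G // w ≠ 1}, v₂ x = ζ ((σ 2) x) := fun x => rfl
    have hmem_img : ∀ (i : Fin 3) (x : {w : G // w ≠ 1}), ζ ((σ i) x) ≠ 0 →
        x.1 ∈ (fun d => g i * d * (g i)⁻¹) '' D := by
      intro i x hx
      have hin : ((σ i) x).1 ∈ D := hζD _ hx
      exact ⟨(g i)⁻¹ * x.1 * g i, hin, by group⟩
    have hζv₁ : (inner ℂ ζ v₁ : ℂ) = 0 := by
      rw [inner_l2]
      have hz : ∀ x : {w : G // w ≠ 1}, conj (ζ x) * v₁ x = 0 := by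
        intro x
        by_cases h1 : ζ x = 0
        · rw [h1, map_zero, zero_mul]
        by_cases h2 : v₁ x = 0
        · rw [h2, mul_zero]
        exact absurd (Set.disjoint_left.mp hdisj₁ (hζD x h1) (hmem_img 1 x h2)) id
      rw [tsum_congr hz, tsum_zero]
    have hζv₂ : (inner ℂ ζ v₂ : ℂ) = 0 := by
      rw [inner_l2]
      have hz : ∀ x : {w : G // w ≠ 1}, conj (ζ x) * v₂ x = 0 := by
        intro x
        by_cases h1 : ζ x = 0
        · rw [h1, map_zero, zero_mul]
        by_cases h2 : v₂ x = 0
        · rw [h2, mul_zero]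
        exact absurd (Set.disjoint_left.mp hdisj₂ (hζD x h1) (hmem_img 2 x h2)) id
      rw [tsum_congr hz, tsum_zero]
    have hv₁v₂ : (inner ℂ v₁ v₂ : ℂ) = 0 := by
      rw [inner_l2]
      have hz : ∀ x : {w : G // w ≠ 1}, conj (v₁ x) * v₂ x = 0 := by
        intro x
        by_cases h1 : v₁ x = 0
        · rw [h1, map_zero, zero_mul]
        by_cases h2 : v₂ x = 0
        · rw [h2, mul_zero]
        exact absurd (Set.disjoint_left.mp hdisj₃ (hmem_img 1 x h1) (hmem_img 2 x h2)) id
      rw [tsum_congr hz, tsum_zero]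
    have hnv₁ : ‖v₁‖ = c := norm_compVec _ _
    have hnv₂ : ‖v₂‖ = c := norm_compVec _ _
    -- the covering fact : ⟪U 0 θ, θ⟫ = 0
    have hU0θ : (inner ℂ (U 0 θ) θ : ℂ) = 0 := by
      rw [inner_l2]
      have hz : ∀ y : {w : G // w ≠ 1}, conj (U 0 θ y) * θ y = 0 := by
        intro y
        by_cases h2 : θ y = 0
        · rw [h2, mul_zero]
        by_cases h1 : U 0 θ y = 0
        · rw [h1, map_zero, zero_mul]
        exfalso
        rw [hptw 0 θ y] at h1
        have hyD : y.1 ∉ D := hθD _ h2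
        have hsyD : (((σ 0).symm y).1) ∉ D := hθD _ h1
        have hsymm : ((σ 0).symm y).1 = g 0 * y.1 * (g 0)⁻¹ := rfl
        have hsne : ((σ 0).symm y).1 ∈ {w : G | w ≠ 1} := ((σ 0).symm y).2
        rw [← hcover] at hsne
        rcases hsne with h | h
        · rw [hsymm] at h; exact hsyD (by rwa [hsymm])
        · obtain ⟨e, heD, he⟩ := h
          rw [hsymm] at he
          have : e = y.1 := by
            have := mul_left_cancel ((mul_right_cancel he))
            exact this
          exact hyD (this ▸ heD)
      rw [tsum_congr hz, tsum_zero]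
    -- quantitative inner product bounds
    have habs_re : ∀ (i : Fin 3) (u : l2 {w : G // w ≠ 1}), |RCLike.re (inner ℂ (U i η - η) u : ℂ)|
        ≤ ‖U i η - η‖ * ‖u‖ :=
      fun i u => le_trans (RCLike.abs_re_le_norm _) (norm_inner_le_norm _ _)
    -- re ⟪θ, v₁⟫ ≥ c² - c/10 , re ⟪θ, v₂⟫ ≥ c² - c/10
    have key12 : ∀ i : Fin 3, i = 1 ∨ i = 2 → ∀ v : l2 {w : G // w ≠ 1}, v = compVec (σ i) ζ →
        (inner ℂ ζ v : ℂ) = 0 → ‖U i η - η‖ < 1/10 →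
        c ^ 2 - (1/10) * c ≤ RCLike.re (inner ℂ θ v : ℂ) := by
      intro i _ v hv hζv hsmall
      have e1 : (inner ℂ (U i η) ζ : ℂ) = inner ℂ η v := by rw [hUadj i η ζ, hv]
      have e2 : (inner ℂ η v : ℂ) = inner ℂ ζ v + inner ℂ θ v := by
        rw [← hadd, inner_add_left]
      have e3 : (inner ℂ (U i η) ζ : ℂ) = inner ℂ η ζ + inner ℂ (U i η - η) ζ := by
        rw [inner_sub_left]; ring
      have e4 : (inner ℂ η ζ : ℂ) = inner ℂ ζ ζ := by
        rw [← hadd, inner_add_left, hθζ, add_zero]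
      have e5 : (inner ℂ θ v : ℂ) = inner ℂ ζ ζ + inner ℂ (U i η - η) ζ := by
        have := e1.trans e2
        rw [hζv, zero_add] at this
        rw [← this, e3, e4]
      have hre : RCLike.re (inner ℂ θ v : ℂ)
          = c ^ 2 + RCLike.re (inner ℂ (U i η - η) ζ : ℂ) := by
        rw [e5, map_add]
        congr 1
        rw [← norm_sq_l2]
      have hb := habs_re i ζ
      have hb2 : |RCLike.re (inner ℂ (U i η - η) ζ : ℂ)| ≤ (1/10) * c := by
        refine le_trans hb ?_
        have := norm_nonneg ζ
        apply mul_le_mul_of_nonneg_right (le_of_lt hsmall) hc0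
      rw [hre]
      have := abs_le.mp hb2
      linarith
    have key1 : c ^ 2 - (1/10) * c ≤ RCLike.re (inner ℂ θ v₁ : ℂ) :=
      key12 1 (Or.inl rfl) v₁ hv₁ hζv₁ hs1
    have key2 : c ^ 2 - (1/10) * c ≤ RCLike.re (inner ℂ θ v₂ : ℂ) :=
      key12 2 (Or.inr rfl) v₂ hv₂ hζv₂ hs2
    -- re ⟪U 0 ζ, θ⟫ ≥ d² - d/10 and ≤ c d
    have key0 : d ^ 2 - (1/10) * d ≤ c * d := by
      have e1 : (inner ℂ (U 0 η) θ : ℂ) = inner ℂ (U 0 ζ) θ := by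
        conv_lhs => rw [← hadd]
        rw [map_add, inner_add_left, hU0θ, add_zero]
      have e3 : (inner ℂ η θ : ℂ) = inner ℂ θ θ := by
        rw [← hadd, inner_add_left, hζθ, zero_add]
      have e2 : (inner ℂ (U 0 η) θ : ℂ) = inner ℂ θ θ + inner ℂ (U 0 η - η) θ := by
        rw [inner_sub_left, ← e3]; ring
      have e4 : (inner ℂ (U 0 ζ) θ : ℂ) = inner ℂ θ θ + inner ℂ (U 0 η - η) θ := by
        rw [← e1, e2]
      have hre : d ^ 2 + RCLike.re (inner ℂ (U 0 η - η) θ : ℂ)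
          = RCLike.re (inner ℂ (U 0 ζ) θ : ℂ) := by
        rw [e4, map_add, ← norm_sq_l2]
      have hb2 : |RCLike.re (inner ℂ (U 0 η - η) θ : ℂ)| ≤ (1/10) * d := by
        refine le_trans (habs_re 0 θ) ?_
        exact mul_le_mul_of_nonneg_right (le_of_lt hs0) hd0
      have hcs : RCLike.re (inner ℂ (U 0 ζ) θ : ℂ) ≤ c * d := by
        refine le_trans (RCLike.re_le_norm _) ?_
        refine le_trans (norm_inner_le_norm _ _) ?_
        rw [hUnorm 0 ζ, ← hc, ← hd]
      have := abs_le.mp hb2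
      linarith
    -- Bessel inequality for the two orthogonal vectors v₁, v₂
    set a : ℂ := inner ℂ v₁ θ with ha
    set b : ℂ := inner ℂ v₂ θ with hb
    have hrea : c ^ 2 - (1/10) * c ≤ RCLike.re a := by
      rw [ha, inner_re_symm]
      exact key1
    have hreb : c ^ 2 - (1/10) * c ≤ RCLike.re b := by
      rw [hb, inner_re_symm]
      exact key2
    set w : l2 {w : G // w ≠ 1} := a • v₁ + b • v₂ with hw
    have hwnorm : ‖w‖ ^ 2 = (‖a‖ ^ 2 + ‖b‖ ^ 2) * c ^ 2 := by
      rw [hw, norm_add_sq (𝕜 := ℂ)]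
      rw [inner_smul_left, inner_smul_right, hv₁v₂]
      rw [norm_smul, norm_smul, hnv₁, hnv₂]
      simp
      ring
    have hwinner : RCLike.re (inner ℂ w θ : ℂ) = ‖a‖ ^ 2 + ‖b‖ ^ 2 := by
      rw [hw, inner_add_left, inner_smul_left, inner_smul_left, ← ha, ← hb]
      rw [RCLike.conj_mul, RCLike.conj_mul, map_add]
      simp [← Complex.ofReal_pow]
    have hbessel : ‖a‖ ^ 2 + ‖b‖ ^ 2 ≤ c ^ 2 * d ^ 2 := by
      have h1 : ‖a‖ ^ 2 + ‖b‖ ^ 2 ≤ ‖w‖ * d := by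
        rw [← hwinner]
        refine le_trans (RCLike.re_le_norm _) ?_
        refine le_trans (norm_inner_le_norm _ _) ?_
        rw [← hd]
      exact bessel_div (by positivity) hc0 hd0 h1 hwnorm
    -- final numeric contradiction
    exact powers_arith hc0 hd0 hpyth key0
      (le_trans hrea (RCLike.re_le_norm a)) (le_trans hreb (RCLike.re_le_norm b)) hbessel
  -- main estimate for unit vectors
  have keybound : ∀ η : l2 {w : G // w ≠ 1}, ‖η‖ = 1 → ‖A η‖ ≤ 1599/400 := by
    intro η hη
    have happ : A η = η + U 0 η + U 1 η + U 2 η := by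
      rw [hA]
      simp [ContinuousLinearMap.add_apply]
    have hpair : ∀ i : Fin 3, (1/10:ℝ) ≤ ‖U i η - η‖ → ‖η + U i η‖ ≤ 799/400 := by
      intro i hi
      have hui : ‖U i η‖ = 1 := by rw [hUnorm i η, hη]
      have hexp := norm_add_sq (𝕜 := ℂ) η (U i η)
      have hexp2 := norm_sub_sq (𝕜 := ℂ) η (U i η)
      have h1 : (1/10:ℝ)^2 ≤ ‖η - U i η‖^2 := by
        rw [norm_sub_rev]
        exact pow_le_pow_left₀ (by norm_num) hi 2
      rw [hη, hui] at hexp hexp2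
      have h2 : ‖η + U i η‖^2 ≤ 399/100 := by nlinarith
      nlinarith [norm_nonneg (η + U i η)]
    have hother : ∀ i : Fin 3, ‖U i η‖ = 1 := fun i => by rw [hUnorm i η, hη]
    rcases dich η hη with h | h | h
    · have e : A η = (η + U 0 η) + (U 1 η + U 2 η) := by rw [happ]; abel
      calc ‖A η‖ ≤ ‖η + U 0 η‖ + ‖U 1 η + U 2 η‖ := by rw [e]; exact norm_add_le _ _
        _ ≤ 799/400 + (‖U 1 η‖ + ‖U 2 η‖) := add_le_add (hpair 0 h) (norm_add_le _ _)
        _ ≤ 1599/400 := by rw [hother 1, hother 2]; norm_num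
    · have e : A η = (η + U 1 η) + (U 0 η + U 2 η) := by rw [happ]; abel
      calc ‖A η‖ ≤ ‖η + U 1 η‖ + ‖U 0 η + U 2 η‖ := by rw [e]; exact norm_add_le _ _
        _ ≤ 799/400 + (‖U 0 η‖ + ‖U 2 η‖) := add_le_add (hpair 1 h) (norm_add_le _ _)
        _ ≤ 1599/400 := by rw [hother 0, hother 2]; norm_num
    · have e : A η = (η + U 2 η) + (U 0 η + U 1 η) := by rw [happ]; abel
      calc ‖A η‖ ≤ ‖η + U 2 η‖ + ‖U 0 η + U 1 η‖ := by rw [e]; exact norm_add_le _ _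
        _ ≤ 799/400 + (‖U 0 η‖ + ‖U 1 η‖) := add_le_add (hpair 2 h) (norm_add_le _ _)
        _ ≤ 1599/400 := by rw [hother 0, hother 1]; norm_num
  -- conclude: operator norm bound
  have hAnorm : ‖A‖ ≤ 1599/400 := by
    refine ContinuousLinearMap.opNorm_le_bound _ (by norm_num) ?_
    intro η
    by_cases h0 : η = 0
    · simp [h0]
    · have hn : 0 < ‖η‖ := norm_pos_iff.mpr h0
      have hnc : ‖((‖η‖ : ℂ)⁻¹)‖ = ‖η‖⁻¹ := by
        simp
      have hru : ‖((‖η‖ : ℂ)⁻¹) • η‖ = 1 := by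
        rw [norm_smul, hnc]
        field_simp
      have hbd := keybound _ hru
      rw [map_smul, norm_smul, hnc] at hbd
      calc ‖A η‖ = ‖η‖ * (‖η‖⁻¹ * ‖A η‖) := by field_simp
        _ ≤ ‖η‖ * (1599/400) := mul_le_mul_of_nonneg_left hbd (norm_nonneg η)
        _ = 1599/400 * ‖η‖ := by ring
  have hquarter : ‖(1/4 : ℂ)‖ = 1/4 := by
    rw [show (1/4 : ℂ) = ((1/4 : ℝ) : ℂ) by norm_num, Complex.norm_real,
      Real.norm_eq_abs]
    norm_num
  calc ‖(1/4 : ℂ) • A‖ = ‖(1/4 : ℂ)‖ * ‖A‖ := norm_smul (1/4 : ℂ) A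
    _ ≤ ‖(1/4 : ℂ)‖ * (1599/400) := mul_le_mul_of_nonneg_left hAnorm (norm_nonneg _)
    _ < 1 := by rw [hquarter]; norm_num
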